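/- Let n ≥ 3, let Q ∈ ℤ[X₁,…,Xₙ] be a quadratic form, let m be a nonzero integer, and let f ∈ ℤ[X₁,…,Xₙ] be a form (homogeneous polynomial) of degree d ≥ 1. Let A ∈ Mₙ(ℤ) be the Hessian matrix of Q (A_{ij} = ∂²Q/∂X_i∂X_j). Let p be a prime such that p does not divide 2·d·m·det(A), and such that the reduction of f modulo p is nonsingular, meaning: the only common zero in K̄ⁿ of the reductions mod p of ∂f/∂X₁,…,∂f/∂Xₙ is 0, where K̄ is an algebraic closure of 𝔽_p. For t ≥ 1 set ρ(p^t) = #{x ∈ (ℤ/p^tℤ)ⁿ : Q(x) = m and f(x) = 0 in ℤ/p^tℤ}. Then for every integer r ≥ 1, ρ(p^{r+1}) = p^{n−2} · ρ(p^r). -/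

import Mathlib

open MvPolynomial

private lemma aeval_ringHom {n : ℕ} {S T : Type*} [CommRing S] [CommRing T]
    (g : S →+* T) (x : Fin n → S) (F : MvPolynomial (Fin n) ℤ) :
    g (aeval x F) = aeval (fun i => g (x i)) F := by
  rw [map_aeval, Subsingleton.elim (g.comp (algebraMap ℤ S)) (algebraMap ℤ T)]
  rfl

private lemma taylor_aux {n : ℕ} {R : Type*} [CommRing R] (c : R) (a b : Fin n → R)
    (g : MvPolynomial (Fin n) ℤ) :
    ∃ k : R, aeval (fun i => a i + c * b i) g
      = aeval a g + c * (∑ i, b i * aeval a (pderiv i g)) + c ^ 2 * k := by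
  induction g using MvPolynomial.induction_on with
  | C q => exact ⟨0, by simp⟩
  | add g₁ g₂ h₁ h₂ =>
    obtain ⟨k₁, e₁⟩ := h₁; obtain ⟨k₂, e₂⟩ := h₂
    refine ⟨k₁ + k₂, ?_⟩
    simp only [map_add, e₁, e₂, mul_add, Finset.sum_add_distrib]
    ring
  | mul_X g i h =>
    obtain ⟨k, e⟩ := h
    refine ⟨k * a i + (∑ j, b j * aeval a (pderiv j g)) * b i + c * (k * b i), ?_⟩
    have hsum : ∑ j, b j * aeval a (pderiv j (g * X i))
        = a i * (∑ j, b j * aeval a (pderiv j g)) + aeval a g * b i := by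
      have hterm : ∀ j ∈ Finset.univ, b j * aeval a (pderiv j (g * X i))
          = a i * (b j * aeval a (pderiv j g))
            + (if i = j then b j * aeval a g else 0) := by
        intro j _
        rw [pderiv_mul, map_add, map_mul, map_mul, aeval_X, pderiv_X, Pi.single_apply]
        split_ifs with hij
        · simp only [map_one]; ring
        · simp only [map_zero]; ring
      rw [Finset.sum_congr rfl hterm, Finset.sum_add_distrib, ← Finset.mul_sum,
        Finset.sum_ite_eq, if_pos (Finset.mem_univ i)]
      ring
    rw [map_mul, map_mul, aeval_X, aeval_X, e, hsum]
    ring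

private lemma euler_monomial {n : ℕ} (v : Fin n →₀ ℕ) (a : ℤ) :
    ∑ i, X i * pderiv i (monomial v a) = C ((∑ i, v i : ℕ) : ℤ) * monomial v a := by
  have hterm : ∀ i : Fin n, X i * pderiv i (monomial v a)
      = monomial v (a * (v i : ℤ)) := by
    intro i
    rw [pderiv_monomial]
    rcases Nat.eq_zero_or_pos (v i) with h | h
    · simp [h]
    · rw [X, monomial_mul, one_mul, add_tsub_cancel_of_le (Finsupp.single_le_iff.2 h)]
  rw [Finset.sum_congr rfl fun i _ => hterm i]
  rw [← map_sum (monomial v) _ Finset.univ, ← Finset.mul_sum, C_mul_monomial]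
  congr 1
  push_cast
  ring

private lemma euler_aux {n d : ℕ} (F : MvPolynomial (Fin n) ℤ) (hF : F.IsHomogeneous d) :
    ∑ i, X i * pderiv i F = C (d : ℤ) * F := by
  conv_lhs => rw [F.as_sum]
  conv_rhs => rw [F.as_sum]
  rw [Finset.mul_sum]
  have : ∀ i : Fin n, X i * pderiv i (∑ v ∈ F.support, monomial v (coeff v F))
      = ∑ v ∈ F.support, X i * pderiv i (monomial v (coeff v F)) := by
    intro i; rw [map_sum, Finset.mul_sum]
  rw [Finset.sum_congr rfl fun i _ => this i, Finset.sum_comm]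
  refine Finset.sum_congr rfl fun v hv => ?_
  rw [euler_monomial]
  have hdeg := hF (mem_support_iff.mp hv)
  have h5 : ∑ i : Fin n, v i = Finsupp.degree v :=
    (Finset.sum_subset (Finset.subset_univ v.support)
      (fun i _ hi => Finsupp.notMem_support_iff.mp hi)).symm
  have h6 : ∑ i : Fin n, v i = d := by
    rw [h5, Finsupp.degree_eq_weight_one]; exact hdeg
  rw [h6]

private lemma fiber_count {K : Type*} [Field K] [Fintype K] [DecidableEq K] {n k : ℕ}
    (L : (Fin n → K) →ₗ[K] (Fin k → K)) (hL : Function.Surjective L) (t : Fin k → K) :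
    (Finset.univ.filter fun y => L y = t).card * Fintype.card K ^ k
      = Fintype.card K ^ n := by
  classical
  have hker : ∀ s : Fin k → K,
      (Finset.univ.filter fun y => L y = s).card
        = (Finset.univ.filter fun y => L y = 0).card := by
    intro s
    obtain ⟨y₀, hy₀⟩ := hL s
    refine Finset.card_bij (fun y _ => y - y₀) ?_ ?_ ?_
    · intro y hy
      simp only [Finset.mem_filter, Finset.mem_univ, true_and] at hy ⊢
      rw [map_sub, hy, hy₀, sub_self]
    · intro y _ y' _ h
      exact sub_left_injective h
    · intro z hz
      simp only [Finset.mem_filter, Finset.mem_univ, true_and] at hz ⊢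
      exact ⟨z + y₀, by rw [map_add, hz, hy₀, zero_add], by rw [add_sub_cancel_right]⟩
  have h1 : Fintype.card (Fin n → K)
      = ∑ s : Fin k → K, (Finset.univ.filter fun y => L y = s).card := by
    rw [← Finset.card_univ]
    exact Finset.card_eq_sum_card_fiberwise fun y _ => Finset.mem_univ _
  rw [hker t]
  have h2 : Fintype.card (Fin n → K)
      = Fintype.card (Fin k → K) * (Finset.univ.filter fun y => L y = 0).card := by
    rw [h1, Finset.sum_congr rfl fun s _ => hker s, Finset.sum_const, Finset.card_univ,
      smul_eq_mul]
  have h3 : Fintype.card (Fin n → K) = Fintype.card K ^ n := by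
    rw [Fintype.card_fun, Fintype.card_fin]
  have h4 : Fintype.card (Fin k → K) = Fintype.card K ^ k := by
    rw [Fintype.card_fun, Fintype.card_fin]
  rw [← h3, h2, h4, mul_comm]

/-- Hensel lifting step in Lemma 5.1 of the paper. -/
theorem stmt_15 (n : ℕ) (hn : 3 ≤ n)
    (Q : MvPolynomial (Fin n) ℤ) (hQ : Q.IsHomogeneous 2)
    (A : Matrix (Fin n) (Fin n) ℤ)
    (hA : ∀ i j, MvPolynomial.pderiv i (MvPolynomial.pderiv j Q) =
      MvPolynomial.C (A i j))
    (m : ℤ) (hm : m ≠ 0)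
    (f : MvPolynomial (Fin n) ℤ) (d : ℕ) (hd : 1 ≤ d) (hf : f.IsHomogeneous d)
    (p : ℕ) [hp : Fact p.Prime]
    (hpA : ¬ ((p : ℤ) ∣ 2 * (d : ℤ) * m * A.det))
    (hfns : ∀ z : Fin n → AlgebraicClosure (ZMod p),
      (∀ i, MvPolynomial.aeval z (MvPolynomial.pderiv i f) = 0) → z = 0)
    (r : ℕ) (hr : 1 ≤ r) :
    Set.ncard {x : Fin n → ZMod (p ^ (r + 1)) |
        MvPolynomial.aeval x Q = (m : ZMod (p ^ (r + 1))) ∧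
        MvPolynomial.aeval x f = 0}
      = p ^ (n - 2) *
        Set.ncard {x : Fin n → ZMod (p ^ r) |
          MvPolynomial.aeval x Q = (m : ZMod (p ^ r)) ∧
          MvPolynomial.aeval x f = 0} := by
  classical
  have hp' : p.Prime := hp.out
  haveI : NeZero (p ^ r) := ⟨pow_ne_zero r hp'.ne_zero⟩
  haveI : NeZero (p ^ (r + 1)) := ⟨pow_ne_zero _ hp'.ne_zero⟩
  -- divisibility facts
  have hpow : p ^ (n - 2) * p ^ 2 = p ^ n := by
    rw [← pow_add, Nat.sub_add_cancel (by omega : 2 ≤ n)]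
  have hp2m : ¬ ((p : ℤ) ∣ 2 * m) := by
    intro h
    exact hpA (by
      have h2 : (2 * (d : ℤ) * m * A.det) = (2 * m) * ((d : ℤ) * A.det) := by ring
      rw [h2]; exact h.mul_right _)
  -- ring homs
  set π : ZMod (p ^ (r + 1)) →+* ZMod (p ^ r) :=
    ZMod.castHom (pow_dvd_pow p (Nat.le_succ r)) _ with hπdef
  set σ' : ZMod (p ^ (r + 1)) →+* ZMod p :=
    ZMod.castHom (dvd_pow_self p (Nat.succ_ne_zero r)) _ with hσdef
  set c : ZMod (p ^ (r + 1)) := (p : ZMod (p ^ (r + 1))) ^ r with hc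
  have hval : ∀ z : ZMod (p ^ (r + 1)), ((z.val : ℕ) : ZMod (p ^ (r + 1))) = z := by
    intro z; rw [ZMod.natCast_val, ZMod.cast_id]
  have hcz : ∀ z : ZMod (p ^ (r + 1)), c * z = 0 ↔ σ' z = 0 := by
    intro z
    conv_lhs => rw [← hval z, hc, ← Nat.cast_pow, ← Nat.cast_mul]
    rw [ZMod.natCast_eq_zero_iff]
    conv_rhs => rw [← hval z]
    rw [map_natCast, ZMod.natCast_eq_zero_iff]
    simp only [pow_succ]
    exact Nat.mul_dvd_mul_iff_left (pow_pos hp'.pos r)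
  have hker : ∀ z : ZMod (p ^ (r + 1)), π z = 0 → ∃ w, z = c * w := by
    intro z hz
    have h1 : (p : ℕ) ^ r ∣ z.val := by
      have h2 : ((z.val : ℕ) : ZMod (p ^ r)) = 0 := by
        rw [← map_natCast π, hval z]; exact hz
      rwa [ZMod.natCast_eq_zero_iff] at h2
    obtain ⟨w, hw⟩ := h1
    refine ⟨(w : ZMod (p ^ (r + 1))), ?_⟩
    rw [← hval z, hw, hc]
    push_cast
    ring
  have hπc : π c = 0 := by
    rw [hc, map_pow, map_natCast, ← Nat.cast_pow, ZMod.natCast_self]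
  have hσc : σ' c = 0 := by
    rw [hc, map_pow, map_natCast, ZMod.natCast_self,
      zero_pow (Nat.one_le_iff_ne_zero.mp hr)]
  have hcc : c * c = 0 := by
    rw [hc, ← pow_add, ← Nat.cast_pow, ZMod.natCast_eq_zero_iff]
    exact pow_dvd_pow p (by omega)
  -- Finsets
  set T1 : Finset (Fin n → ZMod (p ^ (r + 1))) := Finset.univ.filter
      (fun x => aeval x Q = (m : ZMod (p ^ (r + 1))) ∧ aeval x f = 0) with hT1
  set T0 : Finset (Fin n → ZMod (p ^ r)) := Finset.univ.filter
      (fun x => aeval x Q = (m : ZMod (p ^ r)) ∧ aeval x f = 0) with hT0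
  have egoal1 : {x : Fin n → ZMod (p ^ (r + 1)) |
      aeval x Q = (m : ZMod (p ^ (r + 1))) ∧ aeval x f = 0} = ↑T1 := by
    ext x; simp [hT1]
  have egoal2 : {x : Fin n → ZMod (p ^ r) |
      aeval x Q = (m : ZMod (p ^ r)) ∧ aeval x f = 0} = ↑T0 := by
    ext x; simp [hT0]
  rw [egoal1, egoal2, Set.ncard_coe_finset, Set.ncard_coe_finset]
  have hmap : ∀ x ∈ T1, (fun i => π (x i)) ∈ T0 := by
    intro x hx
    rw [hT1, Finset.mem_filter] at hx
    rw [hT0, Finset.mem_filter]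
    refine ⟨Finset.mem_univ _, ?_, ?_⟩
    · rw [← aeval_ringHom π x Q, hx.2.1, map_intCast]
    · rw [← aeval_ringHom π x f, hx.2.2, map_zero]
  rw [Finset.card_eq_sum_card_fiberwise hmap]
  have hfib : ∀ x₀ ∈ T0,
      (T1.filter fun x => (fun i => π (x i)) = x₀).card = p ^ (n - 2) := by
    intro x₀ hx₀
    rw [hT0, Finset.mem_filter] at hx₀
    obtain ⟨-, hQ0, hf0⟩ := hx₀
    set xt : Fin n → ZMod (p ^ (r + 1)) :=
      fun i => (((x₀ i).val : ℕ) : ZMod (p ^ (r + 1))) with hxt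
    have hπxt : (fun i => π (xt i)) = x₀ := by
      funext i
      rw [hxt]
      simp only [map_natCast]
      rw [ZMod.natCast_val, ZMod.cast_id]
    set xb : Fin n → ZMod p := fun i => σ' (xt i) with hxb
    have hσaeval : ∀ F : MvPolynomial (Fin n) ℤ, σ' (aeval xt F) = aeval xb F :=
      fun F => aeval_ringHom σ' xt F
    have hπQ : π (aeval xt Q - (m : ZMod (p ^ (r + 1)))) = 0 := by
      rw [map_sub, aeval_ringHom π xt Q, map_intCast, hπxt, hQ0, sub_self]
    obtain ⟨a, ha⟩ := hker _ hπQ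
    have hπf : π (aeval xt f) = 0 := by
      rw [aeval_ringHom π xt f, hπxt, hf0]
    obtain ⟨b, hb⟩ := hker _ hπf
    have hQb : aeval xb Q = (m : ZMod p) := by
      have h1 : aeval xt Q = (m : ZMod (p ^ (r + 1))) + c * a := by linear_combination ha
      rw [← hσaeval, h1, map_add, map_mul, hσc, zero_mul, add_zero, map_intCast]
    have hfb : aeval xb f = 0 := by
      rw [← hσaeval, hb, map_mul, hσc, zero_mul]
    set gQ : Fin n → ZMod p := fun i => aeval xb (pderiv i Q) with hgQ
    set gf : Fin n → ZMod p := fun i => aeval xb (pderiv i f) with hgf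
    have hEQ : ∑ i, xb i * gQ i = 2 * (m : ZMod p) := by
      have h := congrArg (aeval xb) (euler_aux Q hQ)
      simp only [map_sum, map_mul, aeval_X, aeval_C] at h
      rw [hQb] at h
      have h2 : ∑ i, xb i * gQ i = ∑ i, xb i * aeval xb (pderiv i Q) := rfl
      rw [h2, h]
      norm_num
    have hEf : ∑ i, xb i * gf i = 0 := by
      have h := congrArg (aeval xb) (euler_aux f hf)
      simp only [map_sum, map_mul, aeval_X, aeval_C] at h
      rw [hfb, mul_zero] at h
      exact h
    have hm2 : (2 : ZMod p) * (m : ZMod p) ≠ 0 := by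
      have h1 : ((2 * m : ℤ) : ZMod p) ≠ 0 := by
        rw [Ne, ZMod.intCast_zmod_eq_zero_iff_dvd]
        exact hp2m
      intro h2
      apply h1
      push_cast
      exact h2
    have hind : ∀ α β : ZMod p, (∀ i, α * gQ i + β * gf i = 0) → α = 0 ∧ β = 0 := by
      intro α β hab
      have hsum : α * (2 * (m : ZMod p)) = 0 := by
        have h1 : ∑ i, xb i * (α * gQ i + β * gf i) = (0 : ZMod p) := by
          simp [hab]
        calc α * (2 * (m : ZMod p))
            = α * (∑ i, xb i * gQ i) + β * (∑ i, xb i * gf i) := by rw [hEQ, hEf]; ring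
          _ = ∑ i, xb i * (α * gQ i + β * gf i) := by
              rw [Finset.mul_sum, Finset.mul_sum, ← Finset.sum_add_distrib]
              exact Finset.sum_congr rfl fun i _ => by ring
          _ = 0 := h1
      have hα : α = 0 := by
        rcases mul_eq_zero.mp hsum with h | h
        · exact h
        · exact absurd h hm2
      refine ⟨hα, ?_⟩
      by_contra hβ
      have hgf0 : ∀ i, gf i = 0 := by
        intro i
        have h1 := hab i
        rw [hα, zero_mul, zero_add] at h1
        exact (mul_eq_zero.mp h1).resolve_left hβ
      have hz : ∀ i, aeval
          (fun j => algebraMap (ZMod p) (AlgebraicClosure (ZMod p)) (xb j))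
          (pderiv i f) = 0 := by
        intro i
        refine (aeval_ringHom
          ((algebraMap (ZMod p) (AlgebraicClosure (ZMod p))) : ZMod p →+* _) xb _).symm.trans ?_
        have h1 : aeval xb (pderiv i f) = gf i := rfl
        rw [h1, hgf0 i, map_zero]
      have h0 := hfns _ hz
      have hxb0 : xb = 0 := by
        funext i
        have h1 := congrFun h0 i
        refine (algebraMap (ZMod p) (AlgebraicClosure (ZMod p))).injective ?_
        rw [h1]
        simp
      have hmz : (m : ZMod p) = 0 := by
        rw [← hQb, hxb0]
        have h2 : constantCoeff Q = 0 := by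
          have h3 := hQ.coeff_eq_zero (d := 0) (by simp)
          rwa [constantCoeff_eq]
        rw [show (0 : Fin n → ZMod p) = (0 : Fin n → ZMod p) from rfl, aeval_zero, h2,
          map_zero]
      exact hm2 (by rw [hmz, mul_zero])
    -- the linear map
    set Mx : Matrix (Fin 2) (Fin n) (ZMod p) := Matrix.of ![gQ, gf] with hMx
    set L : (Fin n → ZMod p) →ₗ[ZMod p] (Fin 2 → ZMod p) := Mx.mulVecLin with hLdef
    have hL0 : ∀ y, L y 0 = ∑ i, gQ i * y i := by
      intro y
      simp [hLdef, hMx, Matrix.mulVecLin_apply, Matrix.mulVec, dotProduct]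
    have hL1 : ∀ y, L y 1 = ∑ i, gf i * y i := by
      intro y
      simp [hLdef, hMx, Matrix.mulVecLin_apply, Matrix.mulVec, dotProduct]
    have hLsurj : Function.Surjective L := by
      rw [← LinearMap.range_eq_top]
      by_contra hne
      obtain ⟨φ, hφ0, hφ⟩ := Submodule.exists_dual_map_eq_bot_of_lt_top
        (p := LinearMap.range L) (lt_top_iff_ne_top.mpr hne) inferInstance
      have hφL : ∀ y, φ (L y) = 0 := by
        intro y
        have h1 : φ (L y) ∈ Submodule.map φ (LinearMap.range L) :=
          Submodule.mem_map_of_mem (LinearMap.mem_range_self L y)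
        rw [hφ] at h1
        exact (Submodule.mem_bot (ZMod p)).mp h1
      have hdecomp : ∀ w : Fin 2 → ZMod p,
          φ w = w 0 * φ (Pi.single 0 1) + w 1 * φ (Pi.single 1 1) := by
        intro w
        have hw : w = w 0 • (Pi.single 0 1 : Fin 2 → ZMod p)
            + w 1 • (Pi.single 1 1 : Fin 2 → ZMod p) := by
          funext j; fin_cases j <;> simp
        conv_lhs => rw [hw]
        rw [map_add, map_smul, map_smul, smul_eq_mul, smul_eq_mul]
      have hi : ∀ i, φ (Pi.single 0 1) * gQ i + φ (Pi.single 1 1) * gf i = 0 := by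
        intro i
        have h1 := hφL (Pi.single i 1)
        rw [hdecomp, hL0, hL1] at h1
        simp only [Pi.single_apply, mul_ite, mul_one, mul_zero, Finset.sum_ite_eq',
          Finset.mem_univ, if_pos] at h1
        linear_combination h1
      obtain ⟨hA0, hB0⟩ := hind _ _ hi
      apply hφ0
      apply LinearMap.ext
      intro w
      rw [hdecomp, hA0, hB0]
      simp
    -- the target vector and parameterization of the fiber
    set tv : Fin 2 → ZMod p := ![-σ' a, -σ' b] with htv
    have htv0 : tv 0 = -σ' a := rfl
    have htv1 : tv 1 = -σ' b := rfl
    set ef : (Fin n → ZMod p) → (Fin n → ZMod (p ^ (r + 1))) :=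
      fun y i => xt i + c * (((y i).val : ℕ) : ZMod (p ^ (r + 1))) with hef
    have hσval : ∀ y : ZMod p, σ' (((y.val : ℕ) : ZMod (p ^ (r + 1)))) = y := by
      intro y
      rw [map_natCast, ZMod.natCast_val, ZMod.cast_id]
    have hσS : ∀ (y : Fin n → ZMod p) (F : MvPolynomial (Fin n) ℤ),
        σ' (∑ i, (((y i).val : ℕ) : ZMod (p ^ (r + 1))) * aeval xt (pderiv i F))
          = ∑ i, y i * aeval xb (pderiv i F) := by
      intro y F
      rw [map_sum]
      exact Finset.sum_congr rfl fun i _ => by rw [map_mul, hσval, hσaeval]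
    have hcond : ∀ y, ((aeval (ef y) Q = (m : ZMod (p ^ (r + 1))) ∧ aeval (ef y) f = 0)
        ↔ L y = tv) := by
      intro y
      have hefy : ef y = fun i => xt i + c * (((y i).val : ℕ) : ZMod (p ^ (r + 1))) := rfl
      obtain ⟨kQ, hkQ⟩ :=
        taylor_aux c xt (fun i => (((y i).val : ℕ) : ZMod (p ^ (r + 1)))) Q
      obtain ⟨kf, hkf⟩ :=
        taylor_aux c xt (fun i => (((y i).val : ℕ) : ZMod (p ^ (r + 1)))) f
      rw [sq, hcc, zero_mul, add_zero] at hkQ hkf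
      have hQc : aeval (ef y) Q = (m : ZMod (p ^ (r + 1)))
          ↔ σ' a + ∑ i, y i * gQ i = 0 := by
        have h1 : aeval (ef y) Q - (m : ZMod (p ^ (r + 1)))
            = c * (a + ∑ i, (((y i).val : ℕ) : ZMod (p ^ (r + 1)))
                * aeval xt (pderiv i Q)) := by
          rw [hefy]
          linear_combination hkQ + ha
        constructor
        · intro h2
          have h3 := (hcz _).mp (by rw [← h1, h2, sub_self] :
            c * (a + ∑ i, (((y i).val : ℕ) : ZMod (p ^ (r + 1)))
              * aeval xt (pderiv i Q)) = 0)
          rwa [map_add, hσS] at h3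
        · intro h2
          have h3 : σ' (a + ∑ i, (((y i).val : ℕ) : ZMod (p ^ (r + 1)))
              * aeval xt (pderiv i Q)) = 0 := by
            rw [map_add, hσS]
            exact h2
          exact sub_eq_zero.mp (h1.trans ((hcz _).mpr h3))
      have hfc : aeval (ef y) f = 0 ↔ σ' b + ∑ i, y i * gf i = 0 := by
        have h1 : aeval (ef y) f
            = c * (b + ∑ i, (((y i).val : ℕ) : ZMod (p ^ (r + 1)))
                * aeval xt (pderiv i f)) := by
          rw [hefy]
          linear_combination hkf + hb
        constructor
        · intro h2
          have h3 := (hcz _).mp (h1.symm.trans h2)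
          rwa [map_add, hσS] at h3
        · intro h2
          have h3 : σ' (b + ∑ i, (((y i).val : ℕ) : ZMod (p ^ (r + 1)))
              * aeval xt (pderiv i f)) = 0 := by
            rw [map_add, hσS]
            exact h2
          exact h1.trans ((hcz _).mpr h3)
      rw [hQc, hfc]
      have hsw1 : ∑ i, gQ i * y i = ∑ i, y i * gQ i :=
        Finset.sum_congr rfl fun i _ => mul_comm _ _
      have hsw2 : ∑ i, gf i * y i = ∑ i, y i * gf i :=
        Finset.sum_congr rfl fun i _ => mul_comm _ _
      constructor
      · rintro ⟨h1, h2⟩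
        funext j
        fin_cases j
        · show L y 0 = tv 0
          rw [hL0, htv0, hsw1]
          linear_combination h1
        · show L y 1 = tv 1
          rw [hL1, htv1, hsw2]
          linear_combination h2
      · intro h
        have h0 := congrFun h 0
        have h1 := congrFun h 1
        rw [hL0, htv0, hsw1] at h0
        rw [hL1, htv1, hsw2] at h1
        exact ⟨by linear_combination h0, by linear_combination h1⟩
    -- the bijection
    have hbij : (T1.filter fun x => (fun i => π (x i)) = x₀).card
        = (Finset.univ.filter fun y => L y = tv).card := by
      symm
      refine Finset.card_bij (fun y _ => ef y) ?_ ?_ ?_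
      · intro y hy
        rw [Finset.mem_filter] at hy
        rw [Finset.mem_filter, hT1, Finset.mem_filter]
        refine ⟨⟨Finset.mem_univ _, (hcond y).mpr hy.2⟩, ?_⟩
        funext i
        show π (xt i + c * (((y i).val : ℕ) : ZMod (p ^ (r + 1)))) = x₀ i
        rw [map_add, map_mul, hπc, zero_mul, add_zero]
        exact congrFun hπxt i
      · intro y _ y' _ h
        funext i
        have h2 := congrFun h i
        have h3 : c * ((((y i).val : ℕ) : ZMod (p ^ (r + 1)))
            - (((y' i).val : ℕ) : ZMod (p ^ (r + 1)))) = 0 := by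
          have h2' : xt i + c * (((y i).val : ℕ) : ZMod (p ^ (r + 1)))
              = xt i + c * (((y' i).val : ℕ) : ZMod (p ^ (r + 1))) := h2
          linear_combination h2'
        have h4 := (hcz _).mp h3
        rw [map_sub, hσval, hσval] at h4
        exact sub_eq_zero.mp h4
      · intro x hx
        rw [Finset.mem_filter, hT1, Finset.mem_filter] at hx
        obtain ⟨⟨-, hxQ, hxf⟩, hxπ⟩ := hx
        have hwex : ∀ i, ∃ w, x i - xt i = c * w := by
          intro i
          apply hker
          rw [map_sub, congrFun hxπ i, congrFun hπxt i, sub_self]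
        choose w hw using hwex
        have hefx : ef (fun i => σ' (w i)) = x := by
          funext i
          have h1 : c * (w i - ((((σ' (w i)).val : ℕ)) : ZMod (p ^ (r + 1)))) = 0 :=
            (hcz _).mpr (by rw [map_sub, hσval, sub_self])
          show xt i + c * ((((σ' (w i)).val : ℕ)) : ZMod (p ^ (r + 1))) = x i
          linear_combination - hw i - h1
        exact ⟨fun i => σ' (w i), Finset.mem_filter.mpr ⟨Finset.mem_univ _,
          (hcond _).mp (by rw [hefx]; exact ⟨hxQ, hxf⟩)⟩, hefx⟩
    rw [hbij]
    have hcount := fiber_count L hLsurj tv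
    rw [ZMod.card] at hcount
    apply Nat.eq_of_mul_eq_mul_right (pow_pos hp'.pos 2)
    rw [hpow]
    exact hcount
  rw [Finset.sum_congr rfl hfib, Finset.sum_const, smul_eq_mul, mul_comm]
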